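/- Every transitive permutation group of prime degree is separating: for every graph Γ on the permutation domain preserved by the group, if Γ is neither null nor complete then ω(Γ)·α(Γ) ≠ |V(Γ)|. -/

import Mathlib

open SimpleGraph

/-- The independence number of a graph: the clique number of its complement. -/
noncomputable def SimpleGraph.indepNumCompl {V : Type*} (G : SimpleGraph V) : ℕ :=
  Gᶜ.cliqueNum

lemma cliqueNum_card_top {Ω : Type*} [Fintype Ω] {Γ : SimpleGraph Ω}
    (h : Γ.cliqueNum = Fintype.card Ω) : Γ = ⊤ := by
  classical
  obtain ⟨s, hs⟩ := Γ.exists_isNClique_cliqueNum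
  rw [h] at hs
  have hsu : s = Finset.univ := Finset.eq_univ_of_card s hs.card_eq
  ext a b
  simp only [top_adj]
  constructor
  · exact fun h => h.ne
  · intro hab
    exact hs.isClique (by simp [hsu]) (by simp [hsu]) hab

/-- Every transitive permutation group of prime degree is separating: for every graph
on the permutation domain preserved by the group, if the graph is neither null nor
complete then `ω(Γ)·α(Γ) ≠ |Ω|`. -/
theorem stmt_7 {Ω : Type*} [Fintype Ω] (G : Subgroup (Equiv.Perm Ω))
    (htrans : ∀ a b : Ω, ∃ g ∈ G, g a = b)
    (hp : (Fintype.card Ω).Prime)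
    (Γ : SimpleGraph Ω)
    (hinv : ∀ g ∈ G, ∀ a b : Ω, Γ.Adj (g a) (g b) ↔ Γ.Adj a b)
    (hnn : Γ ≠ ⊥) (hnc : Γ ≠ ⊤) :
    Γ.cliqueNum * Γ.indepNumCompl ≠ Fintype.card Ω := by
  intro h
  have hdvd : Γ.cliqueNum ∣ Fintype.card Ω := ⟨Γ.indepNumCompl, h.symm⟩
  rcases (Nat.Prime.eq_one_or_self_of_dvd hp _ hdvd) with h1 | h2
  · -- cliqueNum = 1, so indepNum = card Ω, so Γᶜ = ⊤, so Γ = ⊥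
    rw [h1, one_mul] at h
    have : Γᶜ = ⊤ := cliqueNum_card_top h
    apply hnn
    calc Γ = Γᶜᶜ := (compl_compl Γ).symm
    _ = ⊤ᶜ := by rw [this]
    _ = ⊥ := by simp
  · exact hnc (cliqueNum_card_top h2)
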